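/- Fix real parameters θ and γ with 0 < θ < 1 and 1 < γ < (1+θ)²/(4θ), and set f(x) = x(1−θx) − γx/(x+1) and x₂ = (1−θ−√((1+θ)²−4γθ))/(2θ). Let x : ℝ → ℝ be a function such that for every t ≥ 0, x is differentiable at t with derivative x′(t) = f(x(t)). If x(0) ∈ [0, x₂), then x(t) → 0 as t → +∞; that is, any initial tumor density below the unstable state converges to the tumor-free state. -/

import Mathlib

open Filter Topology

/-- Barrier lemma: a solution of `x' = f(x)` on `t ≥ 0` starting strictly below a
level `u` with `f u < 0` stays strictly below `u`. -/
lemma tumor_barrier_aux (f : ℝ → ℝ) (x : ℝ → ℝ)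
    (hx : ∀ t, 0 ≤ t → HasDerivAt x (f (x t)) t)
    (u : ℝ) (hu : f u < 0) (h0 : x 0 < u) :
    ∀ t, 0 ≤ t → x t < u := by
  by_contra h
  push_neg at h
  obtain ⟨t₁, ht₁0, ht₁⟩ := h
  set S : Set ℝ := {t | 0 ≤ t ∧ u ≤ x t} with hSdef
  have hS_ne : S.Nonempty := ⟨t₁, ht₁0, ht₁⟩
  have hS_bdd : BddBelow S := ⟨0, fun t ht => ht.1⟩
  have hSclosed : IsClosed S := by
    rw [← isSeqClosed_iff_isClosed]
    intro ts t hts hlim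
    have ht0 : 0 ≤ t := ge_of_tendsto hlim (Eventually.of_forall fun n => (hts n).1)
    refine ⟨ht0, ?_⟩
    have hcx : Tendsto (fun n => x (ts n)) atTop (𝓝 (x t)) :=
      ((hx t ht0).continuousAt.tendsto).comp hlim
    exact ge_of_tendsto hcx (Eventually.of_forall fun n => (hts n).2)
  set t₀ := sInf S with ht₀def
  have ht₀mem : t₀ ∈ S := hSclosed.csInf_mem hS_ne hS_bdd
  have ht₀0 : 0 ≤ t₀ := ht₀mem.1
  have ht₀pos : 0 < t₀ := by
    rcases ht₀0.lt_or_eq with h' | h'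
    · exact h'
    · exfalso; rw [← h'] at ht₀mem; exact absurd ht₀mem.2 (not_le.mpr h0)
  have hlt : ∀ t, 0 ≤ t → t < t₀ → x t < u := by
    intro t ht htlt
    by_contra hge
    push_neg at hge
    exact absurd (csInf_le hS_bdd ⟨ht, hge⟩) (not_le.mpr htlt)
  have hxt₀ : x t₀ = u := by
    refine le_antisymm ?_ ht₀mem.2
    have hcont : ContinuousAt x t₀ := (hx t₀ ht₀0).continuousAt
    have hlim : Tendsto x (𝓝[<] t₀) (𝓝 (x t₀)) :=
      hcont.continuousWithinAt.tendsto
    refine le_of_tendsto hlim ?_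
    filter_upwards [Ioo_mem_nhdsLT ht₀pos] with t ht
    exact (hlt t ht.1.le ht.2).le
  have hder : HasDerivAt x (f u) t₀ := by
    have := hx t₀ ht₀0
    rwa [hxt₀] at this
  have hslope : Tendsto (slope x t₀) (𝓝[≠] t₀) (𝓝 (f u)) :=
    hasDerivAt_iff_tendsto_slope.mp hder
  have hslope' : Tendsto (slope x t₀) (𝓝[<] t₀) (𝓝 (f u)) :=
    hslope.mono_left (nhdsWithin_mono _ (fun t ht => ne_of_lt ht))
  have : 0 ≤ f u := by
    refine ge_of_tendsto hslope' ?_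
    filter_upwards [Ioo_mem_nhdsLT ht₀pos] with t ht
    have hx_lt : x t < u := hlt t ht.1.le ht.2
    have heq : slope x t₀ t = (x t - u) / (t - t₀) := by
      rw [slope_def_field, hxt₀]
    rw [heq]
    exact div_nonneg_of_nonpos (by linarith) (by linarith [ht.2])
  linarith

theorem tumor_converges_to_tumor_free (θ γ : ℝ) (hθ0 : 0 < θ) (hθ1 : θ < 1)
    (hγ1 : 1 < γ) (hγ2 : γ < (1 + θ) ^ 2 / (4 * θ)) (x : ℝ → ℝ)
    (hode : ∀ t : ℝ, 0 ≤ t →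
      HasDerivAt x (x t * (1 - θ * x t) - γ * x t / (x t + 1)) t)
    (hinit : x 0 ∈ Set.Ico (0 : ℝ)
      ((1 - θ - Real.sqrt ((1 + θ) ^ 2 - 4 * γ * θ)) / (2 * θ))) :
    Tendsto x atTop (𝓝 0) := by
  obtain ⟨hx00, hx0lt⟩ := hinit
  set D : ℝ := (1 + θ) ^ 2 - 4 * γ * θ with hDdef
  have hD : 0 < D := by
    have := (lt_div_iff₀ (by positivity : (0:ℝ) < 4 * θ)).mp hγ2
    nlinarith
  set s : ℝ := Real.sqrt D with hsdef
  have hs2 : s ^ 2 = D := Real.sq_sqrt hD.le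
  have hs0 : 0 < s := Real.sqrt_pos.mpr hD
  have hslt : s < 1 - θ := by
    rw [hsdef]
    rw [show (1:ℝ) - θ = Real.sqrt ((1-θ)^2) by
      rw [Real.sqrt_sq (by linarith)]]
    apply Real.sqrt_lt_sqrt hD.le
    nlinarith
  set x₂ : ℝ := (1 - θ - s) / (2 * θ) with hx₂def
  set x₃ : ℝ := (1 - θ + s) / (2 * θ) with hx₃def
  have hx₂pos : 0 < x₂ := div_pos (by linarith) (by linarith)
  have hx₂₃ : x₂ < x₃ := div_lt_div_of_pos_right (by linarith) (by linarith)
  have hquad : ∀ y : ℝ, θ * (y - x₂) * (y - x₃) = θ * y^2 - (1 - θ) * y + (γ - 1) := by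
    intro y
    have key : θ * (y - x₂) * (y - x₃) - (θ * y^2 - (1 - θ) * y + (γ - 1)) = (D - s^2) / (4 * θ) := by
      rw [hx₂def, hx₃def, hDdef]; field_simp; ring
    rw [hs2, sub_self, zero_div, sub_eq_zero] at key
    exact key
  clear_value x₂ x₃ s D
  clear hx₂def hx₃def hsdef hDdef hs2 hs0 hslt hD hγ2
  set F : ℝ → ℝ := fun y => y * (1 - θ * y) - γ * y / (y + 1) with hFdef
  have hfact : ∀ y : ℝ, y + 1 ≠ 0 →
      F y = -(y * (θ * (y - x₂) * (y - x₃))) / (y + 1) := by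
    intro y hy
    rw [hFdef]
    simp only
    rw [hquad y]
    field_simp
    ring
  have hode' : ∀ t : ℝ, 0 ≤ t → HasDerivAt x (F (x t)) t := hode
  -- F < 0 strictly between 0 and x₂
  have hFneg : ∀ u : ℝ, 0 < u → u < x₂ → F u < 0 := by
    intro u hu0 hu2
    rw [hfact u (by linarith)]
    apply div_neg_of_neg_of_pos ?_ (by linarith)
    nlinarith [mul_pos (sub_pos.mpr hu2) (sub_pos.mpr (hu2.trans hx₂₃)),
      mul_pos hu0 hθ0]
  -- F > 0 on (-1, 0)
  have hFpos : ∀ l : ℝ, -1 < l → l < 0 → 0 < F l := by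
    intro l hl1 hl0
    rw [hfact l (by linarith)]
    apply div_pos ?_ (by linarith)
    nlinarith [mul_pos (mul_pos (neg_pos.mpr hl0) hθ0)
      (mul_pos (show (0:ℝ) < x₂ - l by linarith) (show (0:ℝ) < x₃ - l by linarith))]
  -- F ≤ 0 on [0, x₂)
  have hFnonpos : ∀ y : ℝ, 0 ≤ y → y < x₂ → F y ≤ 0 := by
    intro y hy0 hy2
    rw [hfact y (by linarith)]
    apply div_nonpos_of_nonpos_of_nonneg ?_ (by linarith)
    nlinarith [mul_nonneg (mul_nonneg (mul_nonneg hy0 hθ0.le)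
      (sub_pos.mpr hy2).le) (sub_pos.mpr (hy2.trans hx₂₃)).le]
  -- x stays ≤ x 0
  have hub : ∀ t, 0 ≤ t → x t ≤ x 0 := by
    intro t ht
    by_contra hgt
    push_neg at hgt
    set u : ℝ := min ((x 0 + x t)/2) ((x 0 + x₂)/2) with hudef
    have hu0 : x 0 < u := lt_min (by linarith) (by linarith)
    have hu2 : u < x₂ := lt_of_le_of_lt (min_le_right _ _) (by linarith)
    have hupos : 0 < u := lt_of_le_of_lt hx00 hu0
    have h1 := tumor_barrier_aux F x hode' u (hFneg u hupos hu2) hu0 t ht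
    have h2 : x t < (x 0 + x t)/2 := lt_of_lt_of_le h1 (min_le_left _ _)
    linarith
  -- x stays ≥ 0
  have hlb : ∀ t, 0 ≤ t → 0 ≤ x t := by
    intro t ht
    by_contra hneg
    push_neg at hneg
    set l : ℝ := max (x t) (-2⁻¹ : ℝ) with hldef
    have hl1 : -1 < l := lt_of_lt_of_le (by norm_num) (le_max_right _ _)
    have hl0 : l < 0 := max_lt hneg (by norm_num)
    have hFl : 0 < F l := hFpos l hl1 hl0
    have hX : ∀ τ, 0 ≤ τ → HasDerivAt (fun τ => -(x τ)) ((fun y => -(F (-y))) (-(x τ))) τ := by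
      intro τ hτ
      have := (hode' τ hτ).neg
      show HasDerivAt (fun τ => -(x τ)) (-(F (-(-(x τ))))) τ
      rw [neg_neg]
      exact this
    have hbar := tumor_barrier_aux (fun y => -(F (-y))) (fun τ => -(x τ)) hX (-l)
      (by simpa using hFl) (by show -(x 0) < -l; linarith) t ht
    change -(x t) < -l at hbar
    have : l < x t := by linarith
    exact absurd this (not_lt.mpr (le_max_left _ _))
  -- x is antitone on [0, ∞)
  have hanti : AntitoneOn x (Set.Ici (0:ℝ)) := by
    apply antitoneOn_of_deriv_nonpos (convex_Ici 0)
    · exact fun t ht => (hode' t ht).continuousAt.continuousWithinAt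
    · intro t ht
      rw [interior_Ici] at ht
      exact ((hode' t (le_of_lt ht)).differentiableAt).differentiableWithinAt
    · intro t ht
      rw [interior_Ici] at ht
      rw [(hode' t (le_of_lt ht)).deriv]
      exact hFnonpos (x t) (hlb t ht.le) (lt_of_le_of_lt (hub t ht.le) hx0lt)
  -- monotone convergence
  have hanti' : Antitone (fun t => x (max t 0)) := by
    intro a b hab
    exact hanti (Set.mem_Ici.mpr (le_max_right a 0)) (Set.mem_Ici.mpr (le_max_right b 0))
      (max_le_max hab le_rfl)
  have hybdd : BddBelow (Set.range (fun t => x (max t 0))) := by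
    refine ⟨0, ?_⟩
    rintro v ⟨t, rfl⟩
    exact hlb _ (le_max_right _ _)
  set L : ℝ := ⨅ t, x (max t 0) with hLdef
  have hyL : Tendsto (fun t => x (max t 0)) atTop (𝓝 L) := tendsto_atTop_ciInf hanti' hybdd
  have hL0 : 0 ≤ L := le_ciInf fun t => hlb _ (le_max_right _ _)
  have hLle : ∀ t : ℝ, L ≤ x (max t 0) := fun t => ciInf_le hybdd t
  have hxL : Tendsto x atTop (𝓝 L) := by
    refine hyL.congr' ?_
    filter_upwards [eventually_ge_atTop (0:ℝ)] with t ht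
    rw [max_eq_left ht]
  -- show L = 0
  have hLeq : L = 0 := by
    by_contra hne
    have hLpos : 0 < L := lt_of_le_of_ne hL0 (Ne.symm hne)
    have hLx0 : L ≤ x 0 := by
      have := hLle 0
      simpa using this
    set c : ℝ := (L * (θ * (x₂ - x 0) * (x₃ - x 0))) / (x 0 + 1) with hcdef
    have hApos : 0 < L * (θ * (x₂ - x 0) * (x₃ - x 0)) := by
      apply mul_pos hLpos
      exact mul_pos (mul_pos hθ0 (by linarith)) (by linarith)
    have hcpos : 0 < c := div_pos hApos (by linarith)
    -- F z ≤ -c on [L, x 0]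
    have hFle : ∀ z : ℝ, L ≤ z → z ≤ x 0 → F z ≤ -c := by
      intro z hz1 hz2
      have hz0 : 0 < z := lt_of_lt_of_le hLpos hz1
      rw [hfact z (by linarith)]
      have hnum : L * (θ * (x₂ - x 0) * (x₃ - x 0)) ≤ z * (θ * (z - x₂) * (z - x₃)) := by
        have e1 : z * (θ * (z - x₂) * (z - x₃)) = (θ * z) * ((x₂ - z) * (x₃ - z)) := by
          ring
        have e2 : L * (θ * (x₂ - x 0) * (x₃ - x 0)) = (θ * L) * ((x₂ - x 0) * (x₃ - x 0)) := by
          ring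
        rw [e1, e2]
        have h1 : (x₂ - x 0) * (x₃ - x 0) ≤ (x₂ - z) * (x₃ - z) :=
          mul_le_mul (by linarith) (by linarith) (by linarith) (by linarith)
        exact mul_le_mul (by nlinarith) h1
          (mul_nonneg (by linarith) (by linarith)) (by nlinarith)
      have hdiv : c ≤ (z * (θ * (z - x₂) * (z - x₃))) / (z + 1) := by
        rw [hcdef]
        exact div_le_div₀ (le_trans hApos.le hnum) hnum (by linarith) (by linarith)
      rw [neg_div]
      linarith
    -- linear decay : x t + c t is antitone on [0, ∞)
    have hhanti : AntitoneOn (fun t => x t + c * t) (Set.Ici (0:ℝ)) := by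
      apply antitoneOn_of_deriv_nonpos (convex_Ici 0)
      · apply ContinuousOn.add
        · exact fun t ht => (hode' t ht).continuousAt.continuousWithinAt
        · exact (continuous_const.mul continuous_id).continuousOn
      · intro t ht
        rw [interior_Ici] at ht
        exact (((hode' t ht.le).add ((hasDerivAt_id t).const_mul c)).differentiableAt).differentiableWithinAt
      · intro t ht
        rw [interior_Ici] at ht
        have hd : HasDerivAt (fun t => x t + c * t) (F (x t) + c * 1) t := by
          exact (hode' t ht.le).add ((hasDerivAt_id t).const_mul c)
        rw [hd.deriv]
        have hxtL : L ≤ x t := by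
          have := hLle t
          rwa [max_eq_left ht.le] at this
        have := hFle (x t) hxtL (hub t ht.le)
        linarith
    -- evaluate at T = (x 0 + 1)/c
    set T : ℝ := (x 0 + 1) / c with hTdef
    have hT0 : 0 ≤ T := le_of_lt (div_pos (by linarith) hcpos)
    have hhT : x T + c * T ≤ x 0 + c * 0 :=
      hhanti (Set.mem_Ici.mpr le_rfl) (Set.mem_Ici.mpr hT0) hT0
    have hcT : c * T = x 0 + 1 := by
      rw [hTdef]
      field_simp
    rw [hcT] at hhT
    have : x T ≤ -1 := by linarith
    linarith [hlb T hT0]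
  rw [hLeq] at hxL
  exact hxL
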